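/- For a potential U, distribution D, and m ∈ ℕ, the expected distributional Shapley value of a random point satisfies E_{z ~ D}[ν(z; U, D, m)] = (E_{B ~ D^m}[U(B)] − U(∅)) / m (expected efficiency property). -/

import Mathlib

open MeasureTheory

noncomputable def margContrib {Z : Type*} (U : Multiset Z → ℝ) (z : Z) {n : ℕ}
    (S : Fin n → Z) : ℝ :=
  U (z ::ₘ ↑(List.ofFn S)) - U ↑(List.ofFn S)

/-- Distributional Shapley value:
`ν(z; U, D, m) = E_{k ~ Uniform[m], S ~ D^{k-1}}[U(S ∪ {z}) − U(S)]`. -/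
noncomputable def distShapley {Z : Type*} [MeasurableSpace Z] (U : Multiset Z → ℝ)
    (D : Measure Z) (m : ℕ) (z : Z) : ℝ :=
  (1 / m : ℝ) * ∑ k ∈ Finset.Icc 1 m,
    ∫ S : Fin (k - 1) → Z, margContrib U z S ∂(Measure.pi fun _ => D)

section Aux

variable {Z : Type*} [MeasurableSpace Z]

lemma integrable_of_bdd_one {α : Type*} [MeasurableSpace α] (μ : Measure α)
    [IsFiniteMeasure μ] {f : α → ℝ} (hf : Measurable f) (hb : ∀ x, ‖f x‖ ≤ 1) :
    Integrable f μ :=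
  ⟨hf.aestronglyMeasurable, HasFiniteIntegral.of_bounded (C := 1) (ae_of_all _ hb)⟩

lemma meas_cons (U : Multiset Z → ℝ)
    (hUmeas : ∀ n : ℕ, Measurable fun S : Fin n → Z => U ↑(List.ofFn S)) (n : ℕ) :
    Measurable (fun p : Z × (Fin n → Z) => U (p.1 ::ₘ ↑(List.ofFn p.2))) := by
  have h : (fun p : Z × (Fin n → Z) => U (p.1 ::ₘ ↑(List.ofFn p.2)))
      = (fun S : Fin (n+1) → Z => U ↑(List.ofFn S)) ∘ (fun p => Fin.cons p.1 p.2) := by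
    funext p
    simp [Function.comp, List.ofFn_succ, Fin.cons_zero, Fin.cons_succ]
  rw [h]
  refine (hUmeas (n+1)).comp (measurable_pi_lambda _ fun i => ?_)
  refine Fin.cases ?_ (fun j => ?_) i
  · simpa using measurable_fst
  · simp; exact (measurable_pi_apply j).comp measurable_snd

lemma step_eq (U : Multiset Z → ℝ) (hU01 : ∀ S, U S ∈ Set.Icc (0 : ℝ) 1)
    (hUmeas : ∀ n : ℕ, Measurable fun S : Fin n → Z => U ↑(List.ofFn S))
    (D : Measure Z) [IsProbabilityMeasure D] (n : ℕ) :
    ∫ B : Fin (n+1) → Z, U ↑(List.ofFn B) ∂(Measure.pi fun _ => D)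
      = ∫ z, ∫ S : Fin n → Z, U (z ::ₘ ↑(List.ofFn S)) ∂(Measure.pi fun _ => D) ∂D := by
  have habs : ∀ S : Multiset Z, ‖U S‖ ≤ 1 := by
    intro S
    rcases hU01 S with ⟨h0, h1⟩
    rw [Real.norm_eq_abs, abs_le]
    constructor <;> linarith
  set g : Z × (Fin n → Z) → ℝ := fun p => U (p.1 ::ₘ ↑(List.ofFn p.2)) with hg
  have hmp := measurePreserving_piFinSuccAbove (fun _ : Fin (n+1) => D) 0
  have hcomp := hmp.integral_comp
    (MeasurableEquiv.piFinSuccAbove (fun _ : Fin (n+1) => Z) 0).measurableEmbedding g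
  have he : ∀ B : Fin (n+1) → Z,
      g ((MeasurableEquiv.piFinSuccAbove (fun _ : Fin (n+1) => Z) 0) B)
        = U ↑(List.ofFn B) := by
    intro B
    simp only [hg, MeasurableEquiv.piFinSuccAbove_apply, Fin.insertNthEquiv,
      Equiv.coe_fn_symm_mk]
    congr 1
    rw [List.ofFn_succ]
    rfl
  have hint : Integrable g (D.prod (Measure.pi fun _ : Fin n => D)) :=
    integrable_of_bdd_one _ (meas_cons U hUmeas n) (fun p => habs _)
  calc ∫ B : Fin (n+1) → Z, U ↑(List.ofFn B) ∂(Measure.pi fun _ => D)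
      = ∫ B : Fin (n+1) → Z,
          g ((MeasurableEquiv.piFinSuccAbove (fun _ : Fin (n+1) => Z) 0) B)
            ∂(Measure.pi fun _ => D) := by
        congr 1; funext B; rw [he B]
    _ = ∫ p, g p ∂(D.prod (Measure.pi fun _ : Fin n => D)) := hcomp
    _ = ∫ z, ∫ S : Fin n → Z, U (z ::ₘ ↑(List.ofFn S)) ∂(Measure.pi fun _ => D) ∂D :=
        MeasureTheory.integral_prod g hint

end Aux

/-- Expected efficiency: the expected distributional Shapley value of a random point
`z ~ D` equals `(E_{B ~ D^m}[U(B)] − U(∅)) / m`. -/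
theorem distShapley_expected_efficiency {Z : Type*} [MeasurableSpace Z]
    (U : Multiset Z → ℝ) (hU01 : ∀ S, U S ∈ Set.Icc (0 : ℝ) 1)
    (hUmeas : ∀ n : ℕ, Measurable fun S : Fin n → Z => U ↑(List.ofFn S))
    (D : Measure Z) [IsProbabilityMeasure D] (m : ℕ) (hm : 1 ≤ m) :
    ∫ z, distShapley U D m z ∂D
      = ((∫ B : Fin m → Z, U ↑(List.ofFn B) ∂(Measure.pi fun _ => D))
          - U (0 : Multiset Z)) / m := by
  have habs : ∀ S : Multiset Z, ‖U S‖ ≤ 1 := by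
    intro S
    rcases hU01 S with ⟨h0, h1⟩
    rw [Real.norm_eq_abs, abs_le]
    constructor <;> linarith
  set I : ℕ → ℝ := fun n => ∫ B : Fin n → Z, U ↑(List.ofFn B) ∂(Measure.pi fun _ => D)
    with hI
  -- value of I 0
  have hI0 : I 0 = U (0 : Multiset Z) := by
    simp only [hI]
    have : (fun B : Fin 0 → Z => U ↑(List.ofFn B)) = fun _ => U (0 : Multiset Z) := by
      funext B; simp
    rw [this, integral_const]
    simp
  -- the inner function of z
  set g : ℕ → Z → ℝ := fun n z =>
    ∫ S : Fin n → Z, U (z ::ₘ ↑(List.ofFn S)) ∂(Measure.pi fun _ => D) with hgdef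
  have hintS : ∀ (n : ℕ) (z : Z),
      Integrable (fun S : Fin n → Z => U (z ::ₘ ↑(List.ofFn S)))
        (Measure.pi fun _ : Fin n => D) := by
    intro n z
    refine integrable_of_bdd_one _ ?_ (fun S => habs _)
    exact (meas_cons U hUmeas n).comp (measurable_const.prodMk measurable_id)
  have hintS' : ∀ n : ℕ,
      Integrable (fun S : Fin n → Z => U ↑(List.ofFn S))
        (Measure.pi fun _ : Fin n => D) := fun n =>
    integrable_of_bdd_one _ (hUmeas n) (fun S => habs _)
  -- rewrite the inner integral
  have hinner : ∀ (n : ℕ) (z : Z),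
      ∫ S : Fin n → Z, margContrib U z S ∂(Measure.pi fun _ => D) = g n z - I n := by
    intro n z
    simp only [margContrib]
    rw [integral_sub (hintS n z) (hintS' n)]
  -- g n is measurable & bounded, hence integrable
  have hgmeas : ∀ n : ℕ, StronglyMeasurable (g n) := by
    intro n
    exact (meas_cons U hUmeas n).stronglyMeasurable.integral_prod_right'
  have hgbdd : ∀ (n : ℕ) (z : Z), ‖g n z‖ ≤ 1 := by
    intro n z
    calc ‖g n z‖ ≤ 1 * ((Measure.pi fun _ : Fin n => D) Set.univ).toReal :=
          norm_integral_le_of_norm_le_const (ae_of_all _ fun S => habs _)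
      _ = 1 := by simp
  have hgint : ∀ n : ℕ, Integrable (g n) D := fun n =>
    integrable_of_bdd_one _ (hgmeas n).measurable (hgbdd n)
  -- expected value of g n is I (n+1)
  have hgI : ∀ n : ℕ, ∫ z, g n z ∂D = I (n+1) := fun n =>
    (step_eq U hU01 hUmeas D n).symm
  -- main computation
  calc ∫ z, distShapley U D m z ∂D
      = ∫ z, (1 / m : ℝ) * ∑ k ∈ Finset.Icc 1 m, (g (k-1) z - I (k-1)) ∂D := by
        simp only [distShapley]
        congr 1; funext z
        congr 1
        exact Finset.sum_congr rfl fun k _ => hinner (k-1) z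
    _ = (1 / m : ℝ) * ∫ z, ∑ k ∈ Finset.Icc 1 m, (g (k-1) z - I (k-1)) ∂D := by
        rw [integral_const_mul]
    _ = (1 / m : ℝ) * ∑ k ∈ Finset.Icc 1 m, ∫ z, g (k-1) z - I (k-1) ∂D := by
        rw [integral_finset_sum]
        intro k _
        exact (hgint (k-1)).sub (integrable_const _)
    _ = (1 / m : ℝ) * ∑ k ∈ Finset.Icc 1 m, (I k - I (k-1)) := by
        congr 1
        refine Finset.sum_congr rfl fun k hk => ?_
        have hk1 : 1 ≤ k := (Finset.mem_Icc.mp hk).1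
        rw [integral_sub (hgint (k-1)) (integrable_const _), hgI (k-1),
          Nat.sub_add_cancel hk1]
        simp
    _ = (1 / m : ℝ) * (I m - I 0) := by
        congr 1
        rw [show Finset.Icc 1 m = Finset.Ico 1 (m+1) by rw [Finset.Ico_add_one_right_eq_Icc],
          Finset.sum_Ico_eq_sum_range]
        simp only [Nat.add_sub_cancel]
        have h : ∀ i ∈ Finset.range m, I (1 + i) - I (1 + i - 1) = I (i + 1) - I i := by
          intro i _
          rw [Nat.add_comm 1 i, Nat.add_sub_cancel]
        rw [Finset.sum_congr rfl h, Finset.sum_range_sub I m]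
    _ = (I m - U (0 : Multiset Z)) / m := by
        rw [hI0]; ring
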